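/- For b₀, b₁ ∈ ℂ with b₁ ≠ 0 and λ := α₁(1 + b₀/b₁) not a nonpositive integer: b₀·ₚF_q(α₁,…; γ; z) + b₁·ₚF_q(α₁+1, α₂,…; γ; z) = (b₀+b₁)·ₚ₊₁F_{q+1}(α₁,…,αₚ, λ+1; γ₁,…,γ_q, λ; z), as an identity of formal power series. -/

import Mathlib

noncomputable def ascp (x : ℂ) (k : ℕ) : ℂ := (ascPochhammer ℂ k).eval x

noncomputable def pFq (a b : List ℂ) : PowerSeries ℂ :=
  PowerSeries.mk fun k =>
    (a.map fun x => ascp x k).prod / ((b.map fun x => ascp x k).prod * (Nat.factorial k : ℂ))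

lemma ascp_ne_zero {x : ℂ} (h : ∀ m : ℕ, x ≠ -(m : ℂ)) (k : ℕ) : ascp x k ≠ 0 := by
  intro h0
  rw [ascp, ascPochhammer_eval_eq_zero_iff] at h0
  obtain ⟨m, -, hm⟩ := h0
  exact h m (by linear_combination hm)

lemma ascp_step (x : ℂ) (hx : x ≠ 0) (k : ℕ) :
    x * ascp (x + 1) k = ascp x k * (x + k) := by
  induction k with
  | zero => simp [ascp]
  | succ n ih =>
    simp only [ascp, ascPochhammer_succ_eval] at *
    push_cast
    rw [← mul_assoc, ih]
    ring

theorem pFq_two_term_combination (α₁ : ℂ) (αs γs : List ℂ) (b₀ b₁ : ℂ) (hb₁ : b₁ ≠ 0)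
    (hα : ∀ m : ℕ, α₁ ≠ -(m : ℂ)) (hγ : ∀ γ ∈ γs, ∀ m : ℕ, γ ≠ -(m : ℂ))
    (l : ℂ) (hl : l = α₁ * (1 + b₀ / b₁)) (hl' : ∀ m : ℕ, l ≠ -(m : ℂ)) :
    PowerSeries.C b₀ * pFq (α₁ :: αs) γs + PowerSeries.C b₁ * pFq ((α₁ + 1) :: αs) γs
      = PowerSeries.C (b₀ + b₁) * pFq ((α₁ :: αs) ++ [l + 1]) (γs ++ [l]) := by
  have hα0 : α₁ ≠ 0 := by simpa using hα 0
  have hl0 : l ≠ 0 := by simpa using hl' 0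
  have hb : l * b₁ = α₁ * (b₀ + b₁) := by
    field_simp at hl
    linear_combination hl
  set s := b₀ + b₁ with hs
  ext k
  simp only [map_add, PowerSeries.coeff_mul_C, PowerSeries.coeff_C_mul, pFq,
    PowerSeries.coeff_mk, List.map_cons, List.map_append, List.prod_cons, List.prod_append,
    List.map_nil, List.prod_nil, List.prod_singleton, List.map_singleton]
  set A := ascp α₁ k
  set A' := ascp (α₁ + 1) k
  set L := ascp l k
  set L' := ascp (l + 1) k
  set P := (αs.map fun x => ascp x k).prod
  set Q := (γs.map fun x => ascp x k).prod
  have hQ : Q ≠ 0 := by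
    refine List.prod_ne_zero ?_
    simp only [List.mem_map, Q]
    rintro ⟨x, hx, h0⟩
    exact ascp_ne_zero (hγ x hx) k h0
  have hL : L ≠ 0 := ascp_ne_zero hl' k
  have hA : A ≠ 0 := ascp_ne_zero hα k
  have hk : (Nat.factorial k : ℂ) ≠ 0 := Nat.cast_ne_zero.mpr (Nat.factorial_ne_zero k)
  have h1 : α₁ * A' = A * (α₁ + k) := ascp_step α₁ hα0 k
  have h2 : l * L' = L * (l + k) := ascp_step l hl0 k
  have core : (b₀ * A + b₁ * A') * L = s * (A * L') := by
    have : α₁ * l * ((b₀ * A + b₁ * A') * L) = α₁ * l * (s * (A * L')) := by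
      linear_combination l * b₁ * L * h1 - α₁ * s * A * h2 + A * L * (k : ℂ) * hb
    exact mul_left_cancel₀ (mul_ne_zero hα0 hl0) this
  field_simp
  linear_combination P * core
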